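/- Let A, B : {(u,v) ∈ ℝ² : u ≤ v} → [0,∞) be C¹ nonnegative functions with ∂_u A + ∂_v B = 0 everywhere, and A(u,u) = B(u,u) = 0 for all u. Fix T₀ and suppose the initial flux I := ∫_0^∞ (A + B)(T₀ − R, T₀ + R) dR is finite with I ≤ E₀. Then for every T₁ ≥ T₀: (a) for every v̄ ≥ T₀, ∫_{2T₀−v̄}^{min(v̄, 2T₁−v̄)} B(u', v̄) du' ≤ E₀; (b) for every ū ≤ T₁ , ∫_{max(ū, 2T₀−ū)}^{2T₁−ū} A(ū, v') dv' ≤ E₀. -/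

import Mathlib

open Real Set MeasureTheory

/-- Partial derivative in the first null coordinate `u`. -/
noncomputable def du (f : ℝ × ℝ → ℝ) (p : ℝ × ℝ) : ℝ :=
  deriv (fun u => f (u, p.2)) p.1

/-- Partial derivative in the second null coordinate `v`. -/
noncomputable def dv (f : ℝ × ℝ → ℝ) (p : ℝ × ℝ) : ℝ :=
  deriv (fun v => f (p.1, v)) p.2

open intervalIntegral

noncomputable def NFB.Ap (A : ℝ × ℝ → ℝ) (u t : ℝ) : ℝ := A (u, max u t)

noncomputable def NFB.Psi (A : ℝ × ℝ → ℝ) (u v : ℝ) : ℝ := ∫ t in u..v, NFB.Ap A u t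

namespace NFB

def S : Set (ℝ × ℝ) := {p : ℝ × ℝ | p.1 ≤ p.2}

lemma S_convex : Convex ℝ S := by
  intro x hx y hy a b ha hb hab
  simp only [S, mem_setOf_eq] at *
  simp only [Prod.fst_add, Prod.snd_add, Prod.smul_fst, Prod.smul_snd, smul_eq_mul]
  exact add_le_add (mul_le_mul_of_nonneg_left hx ha) (mul_le_mul_of_nonneg_left hy hb)

lemma mem_interior_S {p : ℝ × ℝ} (hp : p.1 < p.2) : p ∈ interior S :=
  interior_maximal (fun q hq => le_of_lt hq) (isOpen_lt continuous_fst continuous_snd) hp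

lemma S_uniqueDiff : UniqueDiffOn ℝ S :=
  uniqueDiffOn_convex S_convex ⟨((0:ℝ),(1:ℝ)), mem_interior_S (by norm_num)⟩

lemma cont_Ap {A : ℝ × ℝ → ℝ} (hAc : ContinuousOn A S) (u : ℝ) :
    Continuous (Ap A u) := by
  refine hAc.comp_continuous (by fun_prop) (fun t => ?_)
  exact le_max_left u t

lemma Psi_self (A : ℝ × ℝ → ℝ) (u : ℝ) : Psi A u u = 0 := integral_same

lemma Psi_sub (A : ℝ × ℝ → ℝ) (hAc : ContinuousOn A S) (u v₁ v₂ : ℝ) :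
    Psi A u v₂ - Psi A u v₁ = ∫ t in v₁..v₂, Ap A u t := by
  rw [Psi, Psi, ← integral_add_adjacent_intervals (a := u) (b := v₁) (c := v₂)
    ((cont_Ap hAc u).intervalIntegrable _ _) ((cont_Ap hAc u).intervalIntegrable _ _)]
  ring

lemma Psi_mono_v {A : ℝ × ℝ → ℝ} (hAc : ContinuousOn A S)
    (hA_nonneg : ∀ p : ℝ × ℝ, p.1 ≤ p.2 → 0 ≤ A p) {u v₁ v₂ : ℝ} (h : v₁ ≤ v₂) :
    Psi A u v₁ ≤ Psi A u v₂ := by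
  have h2 : 0 ≤ ∫ t in v₁..v₂, Ap A u t := by
    refine intervalIntegral.integral_nonneg h (fun t _ => ?_)
    exact hA_nonneg _ (le_max_left u t)
  have := Psi_sub A hAc u v₁ v₂
  linarith

lemma Psi_nonneg {A : ℝ × ℝ → ℝ} (hAc : ContinuousOn A S)
    (hA_nonneg : ∀ p : ℝ × ℝ, p.1 ≤ p.2 → 0 ≤ A p) {u v : ℝ} (h : u ≤ v) :
    0 ≤ Psi A u v := by
  have := Psi_mono_v hAc hA_nonneg (u := u) h
  rwa [Psi_self] at this

lemma Psi_eq {A : ℝ × ℝ → ℝ} (hAc : ContinuousOn A S) (haxis : ∀ u : ℝ, A (u, u) = 0)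
    {c u v : ℝ} (hcu : c ≤ u) :
    Psi A u v = ∫ t in c..v, Ap A u t := by
  rw [Psi, ← integral_add_adjacent_intervals (a := c) (b := u) (c := v)
    ((cont_Ap hAc u).intervalIntegrable _ _) ((cont_Ap hAc u).intervalIntegrable _ _)]
  have h0 : ∫ t in c..u, Ap A u t = 0 := by
    have : EqOn (Ap A u) (fun _ => (0:ℝ)) (uIcc c u) := by
      intro t ht
      rw [uIcc_of_le hcu] at ht
      simp only [Ap, max_eq_left ht.2, haxis u]
    rw [intervalIntegral.integral_congr this]
    simp
  rw [h0, zero_add]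

/-- Uniform Lipschitz bound for `u ↦ Ap A u t` on compact boxes. -/
lemma lip_Ap {A : ℝ × ℝ → ℝ} (hA1 : ContDiffOn ℝ 1 A S) (lo hi : ℝ) :
    ∃ C : ℝ, 0 ≤ C ∧ ∀ t ∈ Icc lo hi, ∀ u ∈ Icc lo hi, ∀ u' ∈ Icc lo hi,
      |Ap A u t - Ap A u' t| ≤ C * |u - u'| := by
  set K : Set (ℝ × ℝ) := {p : ℝ × ℝ | lo ≤ p.1 ∧ p.1 ≤ p.2 ∧ p.2 ≤ hi} with hK
  have hKS : K ⊆ S := fun p hp => hp.2.1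
  have hKc : IsCompact K := by
    have hcl : IsClosed K := by
      have h1 : IsClosed {p : ℝ × ℝ | lo ≤ p.1} := isClosed_le continuous_const continuous_fst
      have h2 : IsClosed {p : ℝ × ℝ | p.1 ≤ p.2} := isClosed_le continuous_fst continuous_snd
      have h3 : IsClosed {p : ℝ × ℝ | p.2 ≤ hi} := isClosed_le continuous_snd continuous_const
      exact (h1.inter (h2.inter h3))
    refine IsCompact.of_isClosed_subset (isCompact_Icc (a := ((lo,lo) : ℝ × ℝ)) (b := (hi,hi)))
      hcl ?_
    rintro ⟨x, y⟩ ⟨h1, h2, h3⟩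
    exact ⟨⟨h1, h1.trans h2⟩, ⟨h2.trans h3, h3⟩⟩
  have hKconv : Convex ℝ K := by
    intro x hx y hy a b ha hb hab
    obtain ⟨hx1, hx2, hx3⟩ := hx
    obtain ⟨hy1, hy2, hy3⟩ := hy
    have e1 : lo = a * lo + b * lo := by rw [← add_mul, hab, one_mul]
    have e2 : hi = a * hi + b * hi := by rw [← add_mul, hab, one_mul]
    refine ⟨?_, ?_, ?_⟩ <;>
      simp only [Prod.fst_add, Prod.snd_add, Prod.smul_fst, Prod.smul_snd, smul_eq_mul]
    · rw [e1]
      exact add_le_add (mul_le_mul_of_nonneg_left hx1 ha) (mul_le_mul_of_nonneg_left hy1 hb)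
    · exact add_le_add (mul_le_mul_of_nonneg_left hx2 ha) (mul_le_mul_of_nonneg_left hy2 hb)
    · rw [e2]
      exact add_le_add (mul_le_mul_of_nonneg_left hx3 ha) (mul_le_mul_of_nonneg_left hy3 hb)
  have hfc : ContinuousOn (fun p => fderivWithin ℝ A S p) K :=
    (hA1.continuousOn_fderivWithin S_uniqueDiff le_rfl).mono hKS
  obtain ⟨C₀, hC₀⟩ := hKc.exists_bound_of_continuousOn hfc
  set C : ℝ := max C₀ 0 with hCdef
  have hC0 : 0 ≤ C := le_max_right _ _
  have hlip : LipschitzOnWith C.toNNReal A K := by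
    refine hKconv.lipschitzOnWith_of_nnnorm_hasFDerivWithin_le
      (f' := fun p => fderivWithin ℝ A S p) (fun x hx => ?_) (fun x hx => ?_)
    · exact (((hA1.differentiableOn one_ne_zero) x (hKS hx)).hasFDerivWithinAt).mono hKS
    · rw [← NNReal.coe_le_coe]
      simp only [coe_nnnorm, Real.coe_toNNReal _ hC0]
      exact le_trans (hC₀ x hx) (le_max_left _ _)
  refine ⟨C, hC0, fun t ht u hu u' hu' => ?_⟩
  have hmem : ∀ w ∈ Icc lo hi, (w, max w t) ∈ K := by
    intro w hw
    exact ⟨hw.1, le_max_left _ _, max_le hw.2 ht.2⟩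
  have := hlip.dist_le_mul (x := (u, max u t)) (hmem u hu) (y := (u', max u' t)) (hmem u' hu')
  rw [Prod.dist_eq] at this
  have hd2 : dist (max u t) (max u' t) ≤ dist u u' := by
    rw [Real.dist_eq, Real.dist_eq]
    exact abs_max_sub_max_le_abs _ _ _
  have hdle : max (dist u u') (dist (max u t) (max u' t)) ≤ dist u u' :=
    max_le le_rfl hd2
  calc |Ap A u t - Ap A u' t| = dist (A (u, max u t)) (A (u', max u' t)) := by
        rw [Real.dist_eq]; rfl
    _ ≤ C.toNNReal * max (dist u u') (dist (max u t) (max u' t)) := this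
    _ ≤ C * dist u u' := by
        rw [Real.coe_toNNReal _ hC0]
        exact mul_le_mul_of_nonneg_left hdle hC0
    _ = C * |u - u'| := by rw [Real.dist_eq]

end NFB

namespace NFB

section Key
variable {A B : ℝ × ℝ → ℝ}

/-- section derivative in `u` at interior points -/
lemma hasDerivAt_sec_u (hA1 : ContDiffOn ℝ 1 A S) {u t : ℝ} (h : u < t) :
    HasDerivAt (fun w => A (w, t)) (fderiv ℝ A (u, t) (1, 0)) u := by
  have hmem : ((u, t) : ℝ × ℝ) ∈ interior S := mem_interior_S h
  have hdA : DifferentiableAt ℝ A (u, t) :=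
    (hA1.differentiableOn one_ne_zero).differentiableAt (mem_interior_iff_mem_nhds.1 hmem)
  have hinner : HasDerivAt (fun w : ℝ => ((w, t) : ℝ × ℝ)) ((1 : ℝ), (0 : ℝ)) u :=
    (hasDerivAt_id u).prodMk (hasDerivAt_const u t)
  exact hdA.hasFDerivAt.comp_hasDerivAt u hinner

lemma du_eq_fderiv (hA1 : ContDiffOn ℝ 1 A S) {u t : ℝ} (h : u < t) :
    du A (u, t) = fderiv ℝ A (u, t) (1, 0) :=
  (hasDerivAt_sec_u hA1 h).deriv

lemma du_interior (hA1 : ContDiffOn ℝ 1 A S) {u t : ℝ} (h : u < t) :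
    HasDerivAt (fun w => A (w, t)) (du A (u, t)) u := by
  rw [du_eq_fderiv hA1 h]
  exact hasDerivAt_sec_u hA1 h

lemma hasDerivAt_sec_v (hB1 : ContDiffOn ℝ 1 B S) {u t : ℝ} (h : u < t) :
    HasDerivAt (fun w => B (u, w)) (fderiv ℝ B (u, t) (0, 1)) t := by
  have hmem : ((u, t) : ℝ × ℝ) ∈ interior S := mem_interior_S h
  have hdB : DifferentiableAt ℝ B (u, t) :=
    (hB1.differentiableOn one_ne_zero).differentiableAt (mem_interior_iff_mem_nhds.1 hmem)
  have hinner : HasDerivAt (fun w : ℝ => ((u, w) : ℝ × ℝ)) ((0 : ℝ), (1 : ℝ)) t :=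
    (hasDerivAt_const t u).prodMk (hasDerivAt_id t)
  exact hdB.hasFDerivAt.comp_hasDerivAt t hinner

lemma dv_eq_fderiv (hB1 : ContDiffOn ℝ 1 B S) {u t : ℝ} (h : u < t) :
    dv B (u, t) = fderiv ℝ B (u, t) (0, 1) :=
  (hasDerivAt_sec_v hB1 h).deriv

lemma dv_interior (hB1 : ContDiffOn ℝ 1 B S) {u t : ℝ} (h : u < t) :
    HasDerivAt (fun w => B (u, w)) (dv B (u, t)) t := by
  rw [dv_eq_fderiv hB1 h]
  exact hasDerivAt_sec_v hB1 h

/-- FTC for the `v`-section of `B`. -/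
lemma integral_dvB (hB1 : ContDiffOn ℝ 1 B S) {u v : ℝ} (huv : u < v) :
    ∫ t in u..v, dv B (u, t) = B (u, v) - B (u, u) := by
  have hBc : ContinuousOn B S := hB1.continuousOn
  refine integral_eq_sub_of_hasDeriv_right_of_le (f := fun t => B (u, t)) huv.le ?_ ?_ ?_
  · exact hBc.comp (by fun_prop) (fun t ht => ht.1)
  · intro t ht
    exact (dv_interior hB1 ht.1).hasDerivWithinAt
  · -- IntervalIntegrable (dv B (u, ·)) on u..v via a.e.-equality with a continuous function
    have hgc : ContinuousOn (fun t => fderivWithin ℝ B S (u, t) (0, 1)) (Icc u v) := by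
      have h1 : ContinuousOn (fun t : ℝ => fderivWithin ℝ B S (u, t))
          (Icc u v) := by
        refine (hB1.continuousOn_fderivWithin S_uniqueDiff le_rfl).comp (by fun_prop)
          (fun t ht => ht.1)
      exact h1.clm_apply continuousOn_const
    have hint : IntervalIntegrable (fun t => fderivWithin ℝ B S (u, t) (0, 1)) volume u v := by
      apply ContinuousOn.intervalIntegrable
      rwa [uIcc_of_le huv.le]
    rw [intervalIntegrable_iff_integrableOn_Ioc_of_le huv.le] at hint ⊢
    refine hint.congr_fun (fun t ht => ?_) measurableSet_Ioc
    have hmem : ((u, t) : ℝ × ℝ) ∈ interior S := mem_interior_S ht.1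
    have hS : S ∈ nhds ((u, t) : ℝ × ℝ) := mem_interior_iff_mem_nhds.1 hmem
    have h1 : fderivWithin ℝ B S (u, t) = fderiv ℝ B (u, t) := fderivWithin_of_mem_nhds hS
    simp only [h1]
    exact (dv_eq_fderiv hB1 ht.1).symm

/-- Key lemma: `u ↦ Psi A u v` has derivative `-B (u₀, v)` for `u₀ < v`. -/
lemma Psi_hasDerivAt_u (hA1 : ContDiffOn ℝ 1 A S) (hB1 : ContDiffOn ℝ 1 B S)
    (hdiv : ∀ p : ℝ × ℝ, p.1 ≤ p.2 → du A p + dv B p = 0)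
    (haxisA : ∀ u : ℝ, A (u, u) = 0) (haxisB : ∀ u : ℝ, B (u, u) = 0)
    {u₀ v : ℝ} (huv : u₀ < v) :
    HasDerivAt (fun u => Psi A u v) (-B (u₀, v)) u₀ := by
  have hAc : ContinuousOn A S := hA1.continuousOn
  set c : ℝ := u₀ - 1 with hc
  set ε : ℝ := min 1 (v - u₀) / 2 with hε
  have hε0 : 0 < ε := by
    have : (0:ℝ) < min 1 (v - u₀) := lt_min one_pos (by linarith)
    positivity
  have hεle1 : ε ≤ 1 / 2 := by
    have : min 1 (v - u₀) ≤ 1 := min_le_left _ _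
    rw [hε]; linarith
  have hεle2 : ε ≤ (v - u₀) / 2 := by
    have : min 1 (v - u₀) ≤ v - u₀ := min_le_right _ _
    rw [hε]; linarith
  have hball : Metric.ball u₀ ε ⊆ Icc c v := by
    intro x hx
    rw [Metric.mem_ball, Real.dist_eq, abs_lt] at hx
    constructor
    · rw [hc]; linarith
    · linarith
  obtain ⟨C, hC0, hCl⟩ := lip_Ap hA1 c v
  set F' : ℝ → ℝ := fun t => if u₀ < t then du A (u₀, t) else 0 with hF'
  have hcv : c < v := by rw [hc]; linarith
  -- measurability of F'
  have hF'_meas : AEStronglyMeasurable F' (volume.restrict (Set.uIoc c v)) := by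
    have hfc : ContinuousOn (fun t => fderiv ℝ A (u₀, t) (1, 0)) (Ioi u₀) := by
      have h0 : ContinuousOn (fderiv ℝ A) (interior S) :=
        (hA1.mono interior_subset).continuousOn_fderiv_of_isOpen isOpen_interior le_rfl
      have h1 : ContinuousOn (fun t : ℝ => fderiv ℝ A (u₀, t)) (Ioi u₀) :=
        h0.comp (by fun_prop) (fun t ht => mem_interior_S ht)
      exact h1.clm_apply continuousOn_const
    have hduc : ContinuousOn (fun t => du A (u₀, t)) (Ioi u₀) := by
      refine hfc.congr (fun t ht => ?_)
      exact du_eq_fderiv hA1 ht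
    have hind : F' = (Ioi u₀).indicator (fun t => du A (u₀, t)) := by
      funext t
      by_cases h : u₀ < t
      · simp [hF', h, Set.indicator_of_mem (Set.mem_Ioi.2 h)]
      · simp [hF', h, Set.indicator_of_notMem (fun hh => h (Set.mem_Ioi.1 hh))]
    rw [hind]
    have : AEStronglyMeasurable (fun t => du A (u₀, t)) (volume.restrict (Ioi u₀)) :=
      hduc.aestronglyMeasurable measurableSet_Ioi
    exact ((aestronglyMeasurable_indicator_iff measurableSet_Ioi).2 this).restrict
  -- differentiability for a.e. t
  have hne : ∀ᵐ t : ℝ, t ≠ u₀ := by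
    rw [MeasureTheory.ae_iff]
    have : {t : ℝ | ¬ t ≠ u₀} = {u₀} := by ext t; simp
    rw [this]
    exact Real.volume_singleton
  have h_diff : ∀ᵐ t : ℝ, t ∈ Set.uIoc c v →
      HasDerivAt (fun u => Ap A u t) (F' t) u₀ := by
    filter_upwards [hne] with t ht _
    rcases lt_or_gt_of_ne ht with h | h
    · -- t < u₀ : locally Ap A u t = A (u,u) = 0
      have hev : (fun u => Ap A u t) =ᶠ[nhds u₀] (fun _ => (0:ℝ)) := by
        filter_upwards [Ioi_mem_nhds h] with u hu
        simp only [Ap, max_eq_left (le_of_lt (mem_Ioi.1 hu)), haxisA u]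
      have : HasDerivAt (fun _ : ℝ => (0:ℝ)) 0 u₀ := hasDerivAt_const _ _
      have h2 := this.congr_of_eventuallyEq hev
      have : F' t = 0 := if_neg (not_lt.2 h.le)
      rwa [this]
    · -- u₀ < t : locally Ap A u t = A (u,t)
      have hev : (fun u => Ap A u t) =ᶠ[nhds u₀] (fun u => A (u, t)) := by
        filter_upwards [Iio_mem_nhds h] with u hu
        simp only [Ap, max_eq_right (le_of_lt (mem_Iio.1 hu))]
      have h2 := (du_interior hA1 h).congr_of_eventuallyEq hev
      have : F' t = du A (u₀, t) := if_pos h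
      rwa [this]
  have h_lip : ∀ᵐ t : ℝ, t ∈ Set.uIoc c v →
      LipschitzOnWith (Real.nnabs C) (fun u => Ap A u t) (Metric.ball u₀ ε) := by
    refine Filter.Eventually.of_forall (fun t ht => ?_)
    rw [Set.uIoc_of_le hcv.le] at ht
    have htm : t ∈ Icc c v := ⟨ht.1.le, ht.2⟩
    rw [lipschitzOnWith_iff_dist_le_mul]
    intro x hx y hy
    rw [Real.dist_eq, Real.dist_eq]
    calc |Ap A x t - Ap A y t| ≤ C * |x - y| :=
          hCl t htm x (hball hx) y (hball hy)
      _ ≤ (Real.nnabs C) * |x - y| := by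
          have : C ≤ (Real.nnabs C : ℝ) := by
            rw [Real.coe_nnabs]; exact le_abs_self C
          exact mul_le_mul_of_nonneg_right this (abs_nonneg _)
  have hmain := intervalIntegral.hasDerivAt_integral_of_dominated_loc_of_lip
    (F := fun u t => Ap A u t) (F' := F') (x₀ := u₀) (a := c) (b := v)
    (bound := fun _ => C) (μ := volume) (Metric.ball_mem_nhds u₀ hε0)
    (Filter.Eventually.of_forall (fun u => ((cont_Ap hAc u).aestronglyMeasurable).restrict))
    ((cont_Ap hAc u₀).intervalIntegrable _ _)
    hF'_meas h_lip (intervalIntegrable_const) h_diff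
  obtain ⟨hFint', hder⟩ := hmain
  -- identify the integral of F'
  have hcu : c ≤ u₀ := by rw [hc]; linarith
  have hint1 : IntervalIntegrable F' volume c u₀ :=
    hFint'.mono_set (by
      rw [uIcc_of_le hcv.le, uIcc_of_le hcu]
      exact Icc_subset_Icc le_rfl huv.le)
  have hint2 : IntervalIntegrable F' volume u₀ v :=
    hFint'.mono_set (by
      rw [uIcc_of_le hcv.le, uIcc_of_le huv.le]
      exact Icc_subset_Icc hcu le_rfl)
  have hsplit : (∫ t in c..u₀, F' t) + (∫ t in u₀..v, F' t) = ∫ t in c..v, F' t :=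
    integral_add_adjacent_intervals hint1 hint2
  have hzero : (∫ t in c..u₀, F' t) = 0 := by
    have : EqOn F' (fun _ => (0:ℝ)) (uIcc c u₀) := by
      intro t ht
      rw [uIcc_of_le hcu] at ht
      exact if_neg (not_lt.2 ht.2)
    rw [intervalIntegral.integral_congr this]
    simp
  have hval : (∫ t in u₀..v, F' t) = - B (u₀, v) := by
    have h1 : (∫ t in u₀..v, F' t) = ∫ t in u₀..v, - dv B (u₀, t) := by
      rw [intervalIntegral.integral_of_le huv.le, intervalIntegral.integral_of_le huv.le]
      refine MeasureTheory.setIntegral_congr_fun measurableSet_Ioc (fun t ht => ?_)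
      have h2 : F' t = du A (u₀, t) := if_pos ht.1
      have h3 := hdiv (u₀, t) ht.1.le
      rw [h2]; linarith
    rw [h1, intervalIntegral.integral_neg, integral_dvB hB1 huv, haxisB u₀]
    ring
  have hev : (fun u => Psi A u v) =ᶠ[nhds u₀] (fun u => ∫ t in c..v, Ap A u t) := by
    have hoo : Ioo c v ∈ nhds u₀ := Ioo_mem_nhds (by rw [hc]; linarith) huv
    filter_upwards [hoo] with u hu
    exact Psi_eq hAc haxisA hu.1.le
  have hfinal := hder.congr_of_eventuallyEq hev
  have : (∫ t in c..v, F' t) = - B (u₀, v) := by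
    rw [← hsplit, hzero, hval]; ring
  rwa [this] at hfinal

end Key

/-- Continuity of `u ↦ Psi A u v` on `Iic v` (squeeze at the diagonal). -/
lemma Psi_contOn_u (hA1 : ContDiffOn ℝ 1 A S) (hB1 : ContDiffOn ℝ 1 B S)
    (hdiv : ∀ p : ℝ × ℝ, p.1 ≤ p.2 → du A p + dv B p = 0)
    (haxisA : ∀ u : ℝ, A (u, u) = 0) (haxisB : ∀ u : ℝ, B (u, u) = 0) (v : ℝ) :
    ContinuousOn (fun u => Psi A u v) (Iic v) := by
  have hAc : ContinuousOn A S := hA1.continuousOn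
  intro u hu
  rcases lt_or_eq_of_le (mem_Iic.1 hu) with h | h
  · exact (Psi_hasDerivAt_u hA1 hB1 hdiv haxisA haxisB h).continuousAt.continuousWithinAt
  · subst h
    -- squeeze at the diagonal
    set K : Set (ℝ × ℝ) := {p : ℝ × ℝ | u - 1 ≤ p.1 ∧ p.1 ≤ p.2 ∧ p.2 ≤ u} with hK
    have hKS : K ⊆ S := fun p hp => hp.2.1
    have hKc : IsCompact K := by
      have hcl : IsClosed K :=
        ((isClosed_le continuous_const continuous_fst).inter
          ((isClosed_le continuous_fst continuous_snd).inter
            (isClosed_le continuous_snd continuous_const)))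
      refine IsCompact.of_isClosed_subset
        (isCompact_Icc (a := ((u-1,u-1) : ℝ × ℝ)) (b := (u,u))) hcl ?_
      rintro ⟨x, y⟩ ⟨h1, h2, h3⟩
      exact ⟨⟨h1, h1.trans h2⟩, ⟨h2.trans h3, h3⟩⟩
    obtain ⟨C, hC⟩ := hKc.exists_bound_of_continuousOn (hAc.mono hKS)
    have hbound : ∀ w ∈ Icc (u-1) u, ‖Psi A w u‖ ≤ C * (u - w) := by
      intro w hw
      have h1 : ∀ t ∈ Set.uIoc w u, ‖Ap A w t‖ ≤ C := by
        intro t ht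
        rw [uIoc_of_le hw.2] at ht
        refine hC _ ⟨hw.1, le_max_left _ _, max_le hw.2 ht.2⟩
      have := intervalIntegral.norm_integral_le_of_norm_le_const h1
      rwa [abs_of_nonneg (by linarith [hw.2] : (0:ℝ) ≤ u - w)] at this
    have hPsiuu : Psi A u u = 0 := Psi_self A u
    rw [ContinuousWithinAt, hPsiuu]
    have hev : ∀ᶠ w in nhdsWithin u (Iic u), ‖Psi A w u‖ ≤ C * (u - w) := by
      have h1 : Ioi (u - 1) ∈ nhdsWithin u (Iic u) :=
        mem_nhdsWithin_of_mem_nhds (Ioi_mem_nhds (by linarith))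
      filter_upwards [h1, self_mem_nhdsWithin] with w hw1 hw2
      exact hbound w ⟨(mem_Ioi.1 hw1).le, mem_Iic.1 hw2⟩
    have hten : Filter.Tendsto (fun w => C * (u - w)) (nhdsWithin u (Iic u)) (nhds 0) := by
      have : Filter.Tendsto (fun w => C * (u - w)) (nhds u) (nhds (C * (u - u))) :=
        (tendsto_const_nhds.mul (tendsto_const_nhds.sub Filter.tendsto_id))
      rw [sub_self, mul_zero] at this
      exact this.mono_left nhdsWithin_le_nhds
    exact squeeze_zero_norm' hev hten

/-- FTC in `u`: the flux through a `v = const` segment. -/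
lemma flux_u (hA1 : ContDiffOn ℝ 1 A S) (hB1 : ContDiffOn ℝ 1 B S)
    (hdiv : ∀ p : ℝ × ℝ, p.1 ≤ p.2 → du A p + dv B p = 0)
    (haxisA : ∀ u : ℝ, A (u, u) = 0) (haxisB : ∀ u : ℝ, B (u, u) = 0)
    {a b v : ℝ} (hab : a ≤ b) (hbv : b ≤ v) :
    ∫ u in a..b, B (u, v) = Psi A a v - Psi A b v := by
  have hBc : ContinuousOn B S := hB1.continuousOn
  have h := integral_eq_sub_of_hasDeriv_right_of_le (f := fun u => Psi A u v)
    (f' := fun u => -B (u, v)) hab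
    ((Psi_contOn_u hA1 hB1 hdiv haxisA haxisB v).mono
      (fun x hx => mem_Iic.2 (hx.2.trans hbv)))
    (fun x hx => (Psi_hasDerivAt_u hA1 hB1 hdiv haxisA haxisB
      (lt_of_lt_of_le hx.2 hbv)).hasDerivWithinAt)
    (by
      refine (ContinuousOn.intervalIntegrable ?_)
      refine ((hBc.comp (by fun_prop) (fun x hx => ?_)).neg)
      rw [uIcc_of_le hab] at hx
      exact hx.2.trans hbv)
  rw [intervalIntegral.integral_neg] at h
  linarith

lemma flux_u' (hA1 : ContDiffOn ℝ 1 A S) (hB1 : ContDiffOn ℝ 1 B S)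
    (hdiv : ∀ p : ℝ × ℝ, p.1 ≤ p.2 → du A p + dv B p = 0)
    (haxisA : ∀ u : ℝ, A (u, u) = 0) (haxisB : ∀ u : ℝ, B (u, u) = 0)
    {a b v : ℝ} (hav : a ≤ v) (hbv : b ≤ v) :
    ∫ u in a..b, B (u, v) = Psi A a v - Psi A b v := by
  rcases le_total a b with h | h
  · exact flux_u hA1 hB1 hdiv haxisA haxisB h hbv
  · rw [intervalIntegral.integral_symm, flux_u hA1 hB1 hdiv haxisA haxisB h hav]
    ring

/-- `u`-antitonicity of `Psi`. -/
lemma Psi_anti_u (hA1 : ContDiffOn ℝ 1 A S) (hB1 : ContDiffOn ℝ 1 B S)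
    (hB_nonneg : ∀ p : ℝ × ℝ, p.1 ≤ p.2 → 0 ≤ B p)
    (hdiv : ∀ p : ℝ × ℝ, p.1 ≤ p.2 → du A p + dv B p = 0)
    (haxisA : ∀ u : ℝ, A (u, u) = 0) (haxisB : ∀ u : ℝ, B (u, u) = 0)
    {u₁ u₂ v : ℝ} (h12 : u₁ ≤ u₂) (h2v : u₂ ≤ v) :
    Psi A u₂ v ≤ Psi A u₁ v := by
  have h := flux_u hA1 hB1 hdiv haxisA haxisB h12 h2v
  have hnn : 0 ≤ ∫ u in u₁..u₂, B (u, v) := by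
    refine intervalIntegral.integral_nonneg h12 (fun u hu => ?_)
    exact hB_nonneg _ (hu.2.trans h2v)
  linarith


/-- Uniform bound for `Psi` on compact boxes. -/
lemma Psi_bound_box {A : ℝ × ℝ → ℝ} (hAc : ContinuousOn A S) (lo hi : ℝ) :
    ∃ C : ℝ, ∀ u v : ℝ, lo ≤ u → u ≤ v → v ≤ hi → ‖Psi A u v‖ ≤ C * (v - u) := by
  set K : Set (ℝ × ℝ) := {p : ℝ × ℝ | lo ≤ p.1 ∧ p.1 ≤ p.2 ∧ p.2 ≤ hi} with hK
  have hKS : K ⊆ S := fun p hp => hp.2.1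
  have hKc : IsCompact K := by
    have hcl : IsClosed K :=
      ((isClosed_le continuous_const continuous_fst).inter
        ((isClosed_le continuous_fst continuous_snd).inter
          (isClosed_le continuous_snd continuous_const)))
    refine IsCompact.of_isClosed_subset
      (isCompact_Icc (a := ((lo,lo) : ℝ × ℝ)) (b := (hi,hi))) hcl ?_
    rintro ⟨x, y⟩ ⟨h1, h2, h3⟩
    exact ⟨⟨h1, h1.trans h2⟩, ⟨h2.trans h3, h3⟩⟩
  obtain ⟨C, hC⟩ := hKc.exists_bound_of_continuousOn (hAc.mono hKS)
  refine ⟨C, fun u v hlo huv hhi => ?_⟩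
  have h1 : ∀ t ∈ Set.uIoc u v, ‖Ap A u t‖ ≤ C := by
    intro t ht
    rw [uIoc_of_le huv] at ht
    exact hC _ ⟨hlo, le_max_left _ _, max_le (huv.trans hhi) (ht.2.trans hhi)⟩
  have := intervalIntegral.norm_integral_le_of_norm_le_const h1
  rwa [abs_of_nonneg (by linarith : (0:ℝ) ≤ v - u)] at this

section Psi2
variable {A B : ℝ × ℝ → ℝ}

/-- Derivative of `Psi` along the initial slice. -/
lemma psi_hasDerivAt (hA1 : ContDiffOn ℝ 1 A S) (hB1 : ContDiffOn ℝ 1 B S)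
    (hdiv : ∀ p : ℝ × ℝ, p.1 ≤ p.2 → du A p + dv B p = 0)
    (haxisA : ∀ u : ℝ, A (u, u) = 0) (haxisB : ∀ u : ℝ, B (u, u) = 0)
    (T₀ : ℝ) {r : ℝ} (hr : 0 < r) :
    HasDerivAt (fun r' => Psi A (T₀ - r') (T₀ + r'))
      (A (T₀ - r, T₀ + r) + B (T₀ - r, T₀ + r)) r := by
  have hAc : ContinuousOn A S := hA1.continuousOn
  have hBc : ContinuousOn B S := hB1.continuousOn
  set u : ℝ := T₀ - r with hu
  set v : ℝ := T₀ + r with hv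
  have huv : u < v := by rw [hu, hv]; linarith
  set g : ℝ → ℝ := fun r' => ∫ t in v..(T₀ + r'), Ap A u t with hg_def
  set h : ℝ → ℝ := fun r' => ∫ s in (T₀ - r')..u, B (s, v) with hh_def
  set e : ℝ → ℝ := fun r' => ∫ t in v..(T₀ + r'), (Ap A (T₀ - r') t - Ap A u t) with he_def
  -- the decomposition identity
  have hident : ∀ r' ∈ Ioi (0:ℝ),
      Psi A (T₀ - r') (T₀ + r') = Psi A u v + g r' + h r' + e r' := by
    intro r' hr'
    have hr'0 : (0:ℝ) < r' := hr'
    have hu'v : T₀ - r' ≤ v := by rw [hv]; linarith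
    have h1 : Psi A (T₀ - r') (T₀ + r') - Psi A (T₀ - r') v
        = ∫ t in v..(T₀ + r'), Ap A (T₀ - r') t := Psi_sub A hAc _ _ _
    have h2 : Psi A (T₀ - r') v - Psi A u v = ∫ s in (T₀ - r')..u, B (s, v) :=
      (flux_u' hA1 hB1 hdiv haxisA haxisB hu'v huv.le).symm
    have h3 : (∫ t in v..(T₀ + r'), Ap A (T₀ - r') t)
        = (∫ t in v..(T₀ + r'), Ap A u t)
          + (∫ t in v..(T₀ + r'), (Ap A (T₀ - r') t - Ap A u t)) := by
      rw [← intervalIntegral.integral_add (g := fun t => Ap A (T₀ - r') t - Ap A u t) ((cont_Ap hAc u).intervalIntegrable _ _)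
        (((cont_Ap hAc (T₀ - r')).sub (cont_Ap hAc u)).intervalIntegrable _ _)]
      refine intervalIntegral.integral_congr (fun t _ => by ring)
    have hg' : g r' = ∫ t in v..(T₀ + r'), Ap A u t := rfl
    have hh' : h r' = ∫ s in (T₀ - r')..u, B (s, v) := rfl
    have he' : e r' = ∫ t in v..(T₀ + r'), (Ap A (T₀ - r') t - Ap A u t) := rfl
    rw [hg', hh', he']
    linarith
  -- derivatives of the pieces
  have hgder : HasDerivAt g (A (u, v)) r := by
    have hP : HasDerivAt (fun w => ∫ t in v..w, Ap A u t) (Ap A u v) v :=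
      intervalIntegral.integral_hasDerivAt_right
        ((cont_Ap hAc u).intervalIntegrable _ _)
        ((cont_Ap hAc u).stronglyMeasurableAtFilter _ _)
        (cont_Ap hAc u).continuousAt
    have hinner : HasDerivAt (fun r' : ℝ => T₀ + r') 1 r := by
      simpa using (hasDerivAt_id r).const_add T₀
    have := HasDerivAt.comp r hP hinner
    change HasDerivAt (fun r' => ∫ t in v..T₀ + r', Ap A u t) (Ap A u v * 1) r at this
    have h2 : Ap A u v = A (u, v) := by
      simp only [Ap, max_eq_right huv.le]
    simpa [hg_def, h2] using this
  have hhder : HasDerivAt h (B (u, v)) r := by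
    have hBcont : ContinuousAt (fun s => B (s, v)) u := by
      have hb : ContinuousAt B (u, v) :=
        hBc.continuousAt (mem_interior_iff_mem_nhds.1 (mem_interior_S huv))
      exact ContinuousAt.comp (f := fun s : ℝ => ((s, v) : ℝ × ℝ)) hb (by fun_prop)
    have hQ : HasDerivAt (fun a => ∫ s in a..u, B (s, v)) (-B (u, v)) u := by
      refine intervalIntegral.integral_hasDerivAt_left ?_ ?_ hBcont
      · rw [intervalIntegrable_iff]
        simp
      · refine ContinuousOn.stronglyMeasurableAtFilter (isOpen_Iio (a := v)) ?_ u huv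
        refine hBc.comp (by fun_prop) (fun s hs => ?_)
        simp only [S, mem_setOf_eq]
        exact le_of_lt hs
    have hinner : HasDerivAt (fun r' : ℝ => T₀ - r') (-1) r := by
      simpa using (hasDerivAt_id r).const_sub T₀
    have := HasDerivAt.comp r hQ hinner
    simp only [Function.comp_def] at this
    have : HasDerivAt (fun r' => ∫ s in (T₀ - r')..u, B (s, v)) (-B (u, v) * -1) r := this
    simpa [hh_def] using this
  have heder : HasDerivAt e 0 r := by
    obtain ⟨C, hC0, hCl⟩ := lip_Ap hA1 (T₀ - (r + 1)) (T₀ + (r + 1))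
    have hbnd : ∀ r' : ℝ, |r' - r| < 1 → ‖e r'‖ ≤ C * |r' - r| * |r' - r| := by
      intro r' hr'
      rw [abs_lt] at hr'
      have hbox : ∀ t ∈ Set.uIoc v (T₀ + r'), ‖Ap A (T₀ - r') t - Ap A u t‖ ≤ C * |r' - r| := by
        intro t ht
        have ht' := uIoc_subset_uIcc ht
        rw [uIcc_comm] at ht'
        have htl : min (T₀ + r') v ≤ t ∧ t ≤ max (T₀ + r') v := by
          rw [← Set.mem_Icc, ← uIcc]
          exact ht'
        have hlo : T₀ - (r + 1) ≤ t := by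
          rcases le_total (T₀ + r') v with hc | hc
          · have := htl.1; rw [min_eq_left hc] at this; rw [hv] at *; linarith
          · have := htl.1; rw [min_eq_right hc] at this; rw [hv] at *; linarith
        have hhi : t ≤ T₀ + (r + 1) := by
          rcases le_total (T₀ + r') v with hc | hc
          · have := htl.2; rw [max_eq_right hc] at this; rw [hv] at *; linarith
          · have := htl.2; rw [max_eq_left hc] at this; rw [hv] at *; linarith
        have h1 := hCl t ⟨hlo, hhi⟩ (T₀ - r') ⟨by linarith, by linarith⟩
          u ⟨by rw [hu]; linarith, by rw [hu]; linarith⟩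
        have h2 : |T₀ - r' - u| = |r' - r| := by
          rw [hu, abs_sub_comm]
          congr 1
          ring
        rw [h2] at h1
        exact h1
      have := intervalIntegral.norm_integral_le_of_norm_le_const hbox
      have h3 : |T₀ + r' - v| = |r' - r| := by
        rw [hv]
        congr 1
        ring
      rw [h3] at this
      exact this
    rw [hasDerivAt_iff_tendsto_slope]
    have hev : ∀ᶠ r' in nhdsWithin r {r}ᶜ, ‖slope e r r'‖ ≤ C * |r' - r| := by
      have hball : Metric.ball r 1 ∈ nhdsWithin r {r}ᶜ :=
        nhdsWithin_le_nhds (Metric.ball_mem_nhds r one_pos)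
      filter_upwards [hball, self_mem_nhdsWithin] with r' h1 h2
      have hne : r' ≠ r := h2
      have hd : |r' - r| < 1 := by
        rw [Metric.mem_ball, Real.dist_eq] at h1
        exact h1
      have her : e r = 0 := by rw [he_def]; simp [hv]
      rw [slope_def_field]
      rw [div_eq_mul_inv]
      rw [norm_mul, norm_inv]
      have h4 : ‖e r' - e r‖ ≤ C * |r' - r| * |r' - r| := by
        rw [her, sub_zero]; exact hbnd r' hd
      have h5 : (0:ℝ) < |r' - r| := by
        rw [abs_pos]; exact sub_ne_zero_of_ne hne
      calc ‖e r' - e r‖ * ‖r' - r‖⁻¹ ≤ (C * |r' - r| * |r' - r|) * ‖r' - r‖⁻¹ := by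
            exact mul_le_mul_of_nonneg_right h4 (by positivity)
        _ = C * |r' - r| := by
            rw [Real.norm_eq_abs]
            field_simp
    have hten : Filter.Tendsto (fun r' => C * |r' - r|) (nhdsWithin r {r}ᶜ) (nhds 0) := by
      have h1 : Filter.Tendsto (fun r' => C * |r' - r|) (nhds r) (nhds (C * |r - r|)) := by
        exact tendsto_const_nhds.mul ((continuous_abs.tendsto _).comp
          (Filter.tendsto_id.sub tendsto_const_nhds))
      rw [sub_self, abs_zero, mul_zero] at h1
      exact h1.mono_left nhdsWithin_le_nhds
    exact squeeze_zero_norm' hev hten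
  -- assemble
  have hsum : HasDerivAt (fun r' => Psi A u v + g r' + h r' + e r')
      (((0 + A (u, v)) + B (u, v)) + 0) r :=
    (((hasDerivAt_const r (Psi A u v)).add hgder).add hhder).add heder
  have hev2 : (fun r' => Psi A (T₀ - r') (T₀ + r'))
      =ᶠ[nhds r] (fun r' => Psi A u v + g r' + h r' + e r') := by
    filter_upwards [Ioi_mem_nhds hr] with r' hr'
    exact hident r' hr'
  have := hsum.congr_of_eventuallyEq hev2
  simpa using this

/-- The slice identity. -/
lemma Psi_slice (hA1 : ContDiffOn ℝ 1 A S) (hB1 : ContDiffOn ℝ 1 B S)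
    (hdiv : ∀ p : ℝ × ℝ, p.1 ≤ p.2 → du A p + dv B p = 0)
    (haxisA : ∀ u : ℝ, A (u, u) = 0) (haxisB : ∀ u : ℝ, B (u, u) = 0)
    (T₀ : ℝ) {R : ℝ} (hR : 0 ≤ R) :
    Psi A (T₀ - R) (T₀ + R)
      = ∫ r in (0:ℝ)..R, (A (T₀ - r, T₀ + r) + B (T₀ - r, T₀ + r)) := by
  have hAc : ContinuousOn A S := hA1.continuousOn
  have hBc : ContinuousOn B S := hB1.continuousOn
  obtain ⟨C, hC⟩ := Psi_bound_box hAc (T₀ - R) (T₀ + R)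
  have hcont : ContinuousOn (fun r' => Psi A (T₀ - r') (T₀ + r')) (Icc 0 R) := by
    intro x hx
    rcases lt_or_eq_of_le hx.1 with h | h
    · exact (psi_hasDerivAt hA1 hB1 hdiv haxisA haxisB T₀ h).continuousAt.continuousWithinAt
    · subst h
      have hval : Psi A (T₀ - 0) (T₀ + 0) = 0 := by
        simp [Psi_self]
      rw [ContinuousWithinAt, hval]
      have hev : ∀ᶠ w in nhdsWithin 0 (Icc 0 R), ‖Psi A (T₀ - w) (T₀ + w)‖ ≤ C * (2 * w) := by
        filter_upwards [self_mem_nhdsWithin] with w hw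
        have := hC (T₀ - w) (T₀ + w) (by linarith [hw.2]) (by linarith [hw.1])
          (by linarith [hw.2])
        have h2 : T₀ + w - (T₀ - w) = 2 * w := by ring
        rwa [h2] at this
      have hten : Filter.Tendsto (fun w : ℝ => C * (2 * w)) (nhdsWithin 0 (Icc 0 R))
          (nhds 0) := by
        have h1 : Filter.Tendsto (fun w : ℝ => C * (2 * w)) (nhds 0) (nhds (C * (2 * 0))) :=
          tendsto_const_nhds.mul (tendsto_const_nhds.mul Filter.tendsto_id)
        rw [mul_zero, mul_zero] at h1
        exact h1.mono_left nhdsWithin_le_nhds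
      exact squeeze_zero_norm' hev hten
  have hint : IntervalIntegrable (fun r => A (T₀ - r, T₀ + r) + B (T₀ - r, T₀ + r))
      volume 0 R := by
    refine ContinuousOn.intervalIntegrable ?_
    rw [uIcc_of_le hR]
    have hm : ∀ x ∈ Icc (0:ℝ) R, ((T₀ - x, T₀ + x) : ℝ × ℝ) ∈ S := by
      intro x hx
      simp only [S, mem_setOf_eq]
      linarith [hx.1]
    exact (hAc.comp (by fun_prop) hm).add (hBc.comp (by fun_prop) hm)
  have h := integral_eq_sub_of_hasDeriv_right_of_le
    (f := fun r' => Psi A (T₀ - r') (T₀ + r'))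
    (f' := fun r => A (T₀ - r, T₀ + r) + B (T₀ - r, T₀ + r)) hR hcont
    (fun x hx => (psi_hasDerivAt hA1 hB1 hdiv haxisA haxisB T₀ hx.1).hasDerivWithinAt)
    hint
  rw [h]
  simp [Psi_self]

end Psi2
end NFB

/-- abstract form of Proposition 4.6: for a nonnegative divergence-free
current `(A,B)` on `{u ≤ v}` vanishing on the axis, the flux through any null segment
between the slices `T = T₀` and `T = T₁` is bounded by the initial flux bound `E₀`. -/
theorem null_flux_bounds_abstract
    (A B : ℝ × ℝ → ℝ) (T₀ E₀ : ℝ)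
    (hA1 : ContDiffOn ℝ 1 A {p : ℝ × ℝ | p.1 ≤ p.2})
    (hB1 : ContDiffOn ℝ 1 B {p : ℝ × ℝ | p.1 ≤ p.2})
    (hA_nonneg : ∀ p : ℝ × ℝ, p.1 ≤ p.2 → 0 ≤ A p)
    (hB_nonneg : ∀ p : ℝ × ℝ, p.1 ≤ p.2 → 0 ≤ B p)
    (hdiv : ∀ p : ℝ × ℝ, p.1 ≤ p.2 → du A p + dv B p = 0)
    (haxis : ∀ u : ℝ, A (u, u) = 0 ∧ B (u, u) = 0)
    (hfin : IntegrableOn (fun R => A (T₀ - R, T₀ + R) + B (T₀ - R, T₀ + R)) (Ioi 0))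
    (hI : (∫ R in Ioi (0:ℝ), (A (T₀ - R, T₀ + R) + B (T₀ - R, T₀ + R))) ≤ E₀) :
    ∀ T₁ : ℝ, T₀ ≤ T₁ →
      (∀ vb : ℝ, T₀ ≤ vb →
        (∫ u' in (2 * T₀ - vb)..(min vb (2 * T₁ - vb)), B (u', vb)) ≤ E₀)
      ∧ (∀ ub : ℝ, ub ≤ T₁ →
        (∫ v' in (max ub (2 * T₀ - ub))..(2 * T₁ - ub), A (ub, v')) ≤ E₀) := by
  have hA1' : ContDiffOn ℝ 1 A NFB.S := hA1
  have hB1' : ContDiffOn ℝ 1 B NFB.S := hB1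
  have hAc : ContinuousOn A NFB.S := hA1'.continuousOn
  have haxisA : ∀ u : ℝ, A (u, u) = 0 := fun u => (haxis u).1
  have haxisB : ∀ u : ℝ, B (u, u) = 0 := fun u => (haxis u).2
  intro T₁ hT₁
  have key : ∀ R : ℝ, 0 ≤ R → NFB.Psi A (T₀ - R) (T₀ + R) ≤ E₀ := by
    intro R hR
    rw [NFB.Psi_slice hA1' hB1' hdiv haxisA haxisB T₀ hR]
    have h1 : (∫ r in (0:ℝ)..R, (A (T₀ - r, T₀ + r) + B (T₀ - r, T₀ + r)))
        = ∫ r in Ioc (0:ℝ) R, (A (T₀ - r, T₀ + r) + B (T₀ - r, T₀ + r)) :=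
      intervalIntegral.integral_of_le hR
    rw [h1]
    have hnn : 0 ≤ᵐ[volume.restrict (Ioi (0:ℝ))]
        fun r => A (T₀ - r, T₀ + r) + B (T₀ - r, T₀ + r) := by
      refine (ae_restrict_iff' measurableSet_Ioi).2 (Filter.Eventually.of_forall ?_)
      intro r hr
      have hr' : (0:ℝ) < r := hr
      have hle : (T₀ - r : ℝ) ≤ T₀ + r := by linarith
      exact add_nonneg (hA_nonneg _ hle) (hB_nonneg _ hle)
    have h2 := setIntegral_mono_set (s := Ioc (0:ℝ) R) hfin hnn
      (HasSubset.Subset.eventuallyLE Ioc_subset_Ioi_self)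
    exact h2.trans hI
  constructor
  · intro vb hvb
    set a : ℝ := 2 * T₀ - vb with ha
    set m : ℝ := min vb (2 * T₁ - vb) with hm
    have ham : a ≤ m := le_min (by rw [ha]; linarith) (by rw [ha]; linarith)
    have hmv : m ≤ vb := min_le_left _ _
    have heq := NFB.flux_u hA1' hB1' hdiv haxisA haxisB ham hmv
    rw [heq]
    have h1 : 0 ≤ NFB.Psi A m vb := NFB.Psi_nonneg hAc hA_nonneg hmv
    have h2 : NFB.Psi A a vb ≤ E₀ := by
      have h3 := key (vb - T₀) (by linarith)
      rw [show T₀ - (vb - T₀) = a by rw [ha]; ring,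
        show T₀ + (vb - T₀) = vb by ring] at h3
      exact h3
    linarith
  · intro ub hub
    set M : ℝ := max ub (2 * T₀ - ub) with hM
    set V : ℝ := 2 * T₁ - ub with hV
    have hubM : ub ≤ M := le_max_left _ _
    have hMV : M ≤ V := max_le (by rw [hV]; linarith) (by rw [hV]; linarith)
    have e1 : (∫ v' in M..V, A (ub, v')) = ∫ t in M..V, NFB.Ap A ub t := by
      refine intervalIntegral.integral_congr (fun t ht => ?_)
      rw [uIcc_of_le hMV] at ht
      simp only [NFB.Ap, max_eq_right (hubM.trans ht.1)]
    have e2 : NFB.Psi A ub V - NFB.Psi A ub M = ∫ t in M..V, NFB.Ap A ub t :=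
      NFB.Psi_sub A hAc ub M V
    rw [e1, ← e2]
    have h1 : 0 ≤ NFB.Psi A ub M := NFB.Psi_nonneg hAc hA_nonneg hubM
    set R : ℝ := max (T₀ - ub) (2 * T₁ - ub - T₀) with hR
    have hR0 : 0 ≤ R := le_trans (by linarith) (le_max_right _ _)
    have c1 : T₀ - R ≤ ub := by
      have := le_max_left (T₀ - ub) (2 * T₁ - ub - T₀)
      rw [hR]; linarith
    have c2 : V ≤ T₀ + R := by
      have := le_max_right (T₀ - ub) (2 * T₁ - ub - T₀)
      rw [hV, hR]; linarith
    have c3 : ub ≤ V := by rw [hV]; linarith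
    have h2 : NFB.Psi A ub V ≤ NFB.Psi A (T₀ - R) V :=
      NFB.Psi_anti_u hA1' hB1' hB_nonneg hdiv haxisA haxisB c1 c3
    have h3 : NFB.Psi A (T₀ - R) V ≤ NFB.Psi A (T₀ - R) (T₀ + R) :=
      NFB.Psi_mono_v hAc hA_nonneg c2
    have h4 := key R hR0
    linarith
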